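/- The word function sq : {0,1}* → ℚ defined by sq(w) = 2^{ℓ(w)²}, where ℓ(w) is the length of w, is not recognizable by any weighted automaton over ℚ: its Hankel matrix has infinite rank. -/

import Mathlib

open Matrix

def wordProd {S : Type*} [CommSemiring S] {A : Type*} {r : ℕ}
    (μ : A → Matrix (Fin r) (Fin r) S) (w : List A) : Matrix (Fin r) (Fin r) S :=
  (w.map μ).prod

lemma key_li (n : ℕ) :
    LinearIndependent ℚ
      (fun i : Fin n => (fun v : List Bool =>
        (2 : ℚ) ^ (((List.replicate (i : ℕ) true) ++ v).length ^ 2))) := by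
  classical
  -- evaluation map
  let E : (List Bool → ℚ) →ₗ[ℚ] (Fin n → ℚ) :=
    { toFun := fun f k => f (List.replicate (k : ℕ) true)
      map_add' := fun f g => rfl
      map_smul' := fun c f => rfl }
  have hM : LinearIndependent ℚ (fun i : Fin n => (fun k : Fin n =>
      (2 : ℚ) ^ (((i : ℕ) + (k : ℕ)) ^ 2))) := by
    set a : Fin n → ℚ := fun i => (2 : ℚ) ^ ((i : ℕ) ^ 2) with ha
    set x : Fin n → ℚ := fun i => (4 : ℚ) ^ (i : ℕ) with hx
    have hMeq : (fun i : Fin n => (fun k : Fin n =>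
        (2 : ℚ) ^ (((i : ℕ) + (k : ℕ)) ^ 2))) =
        fun i => (diagonal a * vandermonde x * diagonal a) i := by
      funext i k
      simp only [diagonal_mul, mul_diagonal, vandermonde_apply, ha, hx]
      have h4 : (4 : ℚ) = 2 ^ 2 := by norm_num
      rw [h4, ← pow_mul, ← pow_mul, ← pow_add, ← pow_add]
      ring_nf
    rw [hMeq]
    apply linearIndependent_rows_iff_isUnit.2
    have hdet : (diagonal a * vandermonde x * diagonal a).det ≠ 0 := by
      rw [det_mul, det_mul, det_diagonal, det_vandermonde]
      apply mul_ne_zero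
      apply mul_ne_zero
      · exact Finset.prod_ne_zero_iff.2 fun i _ => by positivity
      · refine Finset.prod_ne_zero_iff.2 fun i _ => Finset.prod_ne_zero_iff.2 fun j hj => ?_
        have hij : (i : ℕ) < (j : ℕ) := by
          simpa [Finset.mem_filter] using hj
        have : x i < x j := by
          simp only [hx]
          exact pow_lt_pow_right₀ (by norm_num) hij
        exact sub_ne_zero.2 this.ne'
      · exact Finset.prod_ne_zero_iff.2 fun i _ => by positivity
    exact (Matrix.isUnit_iff_isUnit_det _).2 (isUnit_iff_ne_zero.2 hdet)
  refine LinearIndependent.of_comp E ?_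
  convert hM with i k
  simp [E, List.length_replicate]

theorem sq_not_recognizable :
    (∀ n : ℕ, ∃ u : Fin n → List Bool,
      LinearIndependent ℚ
        (fun i : Fin n => (fun v : List Bool => (2 : ℚ) ^ ((u i ++ v).length ^ 2)))) ∧
    ¬ ∃ (r : ℕ) (α γ : Fin r → ℚ) (μ : Bool → Matrix (Fin r) (Fin r) ℚ),
      ∀ w : List Bool, (2 : ℚ) ^ (w.length ^ 2) = α ⬝ᵥ (wordProd μ w *ᵥ γ) := by
  constructor
  · intro n
    exact ⟨fun i => List.replicate (i : ℕ) true, key_li n⟩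
  · rintro ⟨r, α, γ, μ, h⟩
    classical
    have hli := key_li (r + 1)
    set u : Fin (r + 1) → List Bool := fun i => List.replicate (i : ℕ) true with hu
    set g : Fin r → (List Bool → ℚ) := fun j => fun v => (wordProd μ v *ᵥ γ) j with hg
    set p : Submodule ℚ (List Bool → ℚ) := Submodule.span ℚ (Set.range g) with hp
    set F : Fin (r + 1) → (List Bool → ℚ) :=
      fun i => fun v => (2 : ℚ) ^ ((u i ++ v).length ^ 2) with hF
    have hmem : ∀ i, F i ∈ p := by
      intro i
      have hFi : F i = ∑ j : Fin r, (α ᵥ* wordProd μ (u i)) j • g j := by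
        funext v
        have := h (u i ++ v)
        have hprod : wordProd μ (u i ++ v) = wordProd μ (u i) * wordProd μ v := by
          simp [wordProd, List.map_append]
        rw [hF]
        simp only [this, hprod, ← Matrix.mulVec_mulVec, Matrix.dotProduct_mulVec (v := α)]
        simp [dotProduct, hg, Finset.sum_apply]
      rw [hFi]
      exact Submodule.sum_mem _ fun j _ =>
        Submodule.smul_mem _ _ (Submodule.subset_span ⟨j, rfl⟩)
    have hli' : LinearIndependent ℚ (fun i => (⟨F i, hmem i⟩ : p)) := by
      apply LinearIndependent.of_comp p.subtype
      exact hli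
    have hfin : Module.Finite ℚ p := by
      apply FiniteDimensional.span_of_finite
      exact Set.finite_range g
    have hcard := hli'.fintype_card_le_finrank
    have hle : Module.finrank ℚ p ≤ r := by
      simpa [Set.finrank, hp] using finrank_range_le_card (R := ℚ) g
    simp [Fintype.card_fin] at hcard
    omega
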